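/- Let q ≡ 3 (mod 4) be a prime power. Then 2^6 · K_4(G_2(q)) = q(q−1)(q−3)(q−7), where G_2(q) is the Paley tournament (the 2nd power Paley digraph) of order q. -/

import Mathlib

open Finset

/-- Number of transitive subtournaments of order `m` of the digraph `edge`. -/
noncomputable def transK {V : Type} [DecidableEq V] (edge : V → V → Prop) (m : ℕ) : ℕ :=
  {s : Finset V | ∃ f : Fin m → V, Function.Injective f ∧ s = Finset.image f Finset.univ ∧
    ∀ i j : Fin m, i < j → edge (f i) (f j)}.ncard


set_option linter.unusedSectionVars false
section Aux
variable {F : Type} [Field F] [Fintype F] [DecidableEq F]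

def pedge (a b : F) : Prop := ∃ c : F, c ≠ 0 ∧ b - a = c ^ 2

instance (a b : F) : Decidable (pedge a b) :=
  decidable_of_iff (∃ c : F, c ≠ 0 ∧ b - a = c ^ 2) Iff.rfl

lemma pedge_ne {a b : F} (h : pedge a b) : a ≠ b := by
  obtain ⟨c, hc, h⟩ := h
  intro e; rw [e, sub_self] at h
  exact hc (pow_eq_zero_iff (n := 2) (by norm_num) |>.mp h.symm)

lemma sq_eq_sq_iff' {s c : F} : s ^ 2 = c ^ 2 ↔ s = c ∨ s = -c := by
  constructor
  · intro h
    have : (s - c) * (s + c) = 0 := by ring_nf; linear_combination h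
    rcases mul_eq_zero.mp this with h' | h'
    · left; exact sub_eq_zero.mp h'
    · right; exact eq_neg_of_add_eq_zero_left h'
  · rintro (rfl | rfl) <;> ring

lemma pedge_asymm (hns : ¬ IsSquare (-1 : F)) {a b : F} (h : pedge a b) : ¬ pedge b a := by
  rintro ⟨e, he, hea⟩
  obtain ⟨c, hc, hcb⟩ := h
  apply hns
  refine ⟨c * e⁻¹, ?_⟩
  field_simp
  linear_combination hcb + hea

lemma isSquare_or_neg (hns : ¬ IsSquare (-1 : F)) {d : F} (hd : d ≠ 0) :
    IsSquare d ∨ IsSquare (-d) := by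
  rcases quadraticChar_dichotomy hd with h | h
  · exact Or.inl ((quadraticChar_one_iff_isSquare hd).mp h)
  · have hnd : (-d : F) ≠ 0 := neg_ne_zero.mpr hd
    rcases quadraticChar_dichotomy hnd with h' | h'
    · exact Or.inr ((quadraticChar_one_iff_isSquare hnd).mp h')
    · exfalso
      have hm : quadraticChar F (-1) * quadraticChar F d = quadraticChar F (-d) := by
        rw [← map_mul]; ring_nf
      rw [h, h'] at hm
      have h1 : quadraticChar F (-1) = 1 := by omega
      exact hns ((quadraticChar_one_iff_isSquare (neg_ne_zero.mpr one_ne_zero)).mp h1)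

lemma pedge_total (hns : ¬ IsSquare (-1 : F)) {a b : F} (h : a ≠ b) :
    pedge a b ∨ pedge b a := by
  have hd : b - a ≠ 0 := sub_ne_zero.mpr (Ne.symm h)
  rcases isSquare_or_neg hns hd with ⟨r, hr⟩ | ⟨r, hr⟩
  · left; exact ⟨r, fun h0 => hd (by rw [hr, h0, mul_zero]), by rw [hr]; ring⟩
  · right
    refine ⟨r, fun h0 => hd ?_, by rw [show a - b = -(b-a) by ring, hr]; ring⟩
    rw [h0, mul_zero] at hr
    have : b - a = 0 := by linear_combination -hr
    exact this

lemma ne_neg_self (h2 : (2:F) ≠ 0) {r : F} (hr : r ≠ 0) : r ≠ -r := by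
  intro h
  apply hr
  have : 2 * r = 0 := by linear_combination h
  rcases mul_eq_zero.mp this with h' | h'
  · exact absurd h' h2
  · exact h'

lemma cardV_aux (h2 : (2:F) ≠ 0) (hns : ¬ IsSquare (-1 : F)) {d r : F} (hd : d ≠ 0)
    (hr : d = r * r) :
    (univ.filter fun v : F => v ≠ 0 ∧ v^2 ≠ d ∧ v^2 ≠ -d).card = Fintype.card F - 3 := by
  have hr0 : r ≠ 0 := fun h => hd (by rw [hr, h, mul_zero])
  have hsqd : ∀ v : F, v^2 = d ↔ v = r ∨ v = -r := fun v => by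
    rw [hr, ← sq]; exact sq_eq_sq_iff'
  have hnsq : ∀ v : F, v^2 ≠ -d := by
    intro v h
    have hv0 : v ≠ 0 := by
      intro h0; rw [h0] at h; apply hd
      exact neg_eq_zero.mp (by simpa using h.symm)
    apply hns
    refine ⟨v * r⁻¹, ?_⟩
    field_simp
    linear_combination -h + hr
  have hcompl : univ.filter (fun v : F => ¬(v ≠ 0 ∧ v^2 ≠ d ∧ v^2 ≠ -d)) = {0, r, -r} := by
    ext v
    simp only [mem_filter, mem_univ, true_and, mem_insert, mem_singleton,
      not_and_or, not_not, hsqd v]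
    constructor
    · rintro (h | h | h)
      · exact Or.inl h
      · tauto
      · exact absurd h (hnsq v)
    · tauto
  have hcard3 : ({0, r, -r} : Finset F).card = 3 := by
    rw [card_insert_of_notMem, card_insert_of_notMem, card_singleton]
    · simpa using ne_neg_self h2 hr0
    · simp only [mem_insert, mem_singleton, not_or]
      exact ⟨Ne.symm hr0, fun h => hr0 (by simpa using h.symm)⟩
  have := Finset.card_filter_add_card_filter_not
    (s := (univ : Finset F)) (p := fun v : F => v ≠ 0 ∧ v^2 ≠ d ∧ v^2 ≠ -d)
  rw [hcompl, hcard3, card_univ] at this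
  omega

lemma cardV (h2 : (2:F) ≠ 0) (hns : ¬ IsSquare (-1 : F)) {d : F} (hd : d ≠ 0) :
    (univ.filter fun v : F => v ≠ 0 ∧ v^2 ≠ d ∧ v^2 ≠ -d).card = Fintype.card F - 3 := by
  rcases isSquare_or_neg hns hd with ⟨r, hr⟩ | ⟨r, hr⟩
  · exact cardV_aux h2 hns hd hr
  · have heq : (univ.filter fun v : F => v ≠ 0 ∧ v^2 ≠ d ∧ v^2 ≠ -d)
        = (univ.filter fun v : F => v ≠ 0 ∧ v^2 ≠ -d ∧ v^2 ≠ -(-d)) := by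
      ext v; simp only [mem_filter, mem_univ, true_and, neg_neg]; tauto
    rw [heq]; exact cardV_aux h2 hns (neg_ne_zero.mpr hd) hr

lemma cardP (h2 : (2:F) ≠ 0) (hns : ¬ IsSquare (-1 : F)) {d : F} (hd : d ≠ 0) :
    (univ.filter fun st : F × F => st.1 ≠ 0 ∧ st.2 ≠ 0 ∧ st.2^2 - st.1^2 = d).card
      = Fintype.card F - 3 := by
  rw [← cardV h2 hns hd]
  apply Finset.card_nbij' (fun st => st.2 - st.1)
    (fun v => ((d/v - v)/2, (d/v + v)/2))
  · rintro ⟨s,t⟩ hst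
    simp only [mem_filter, mem_univ, true_and, mem_coe] at hst ⊢
    obtain ⟨hs, ht, he⟩ := hst
    refine ⟨?_, ?_, ?_⟩
    · intro h; apply hd; rw [← he]
      have h3 : t = s := by linear_combination h
      rw [h3]; ring
    · intro h
      have h4 : (2*s)*(s - t) = 0 := by linear_combination h - he
      rcases mul_eq_zero.mp h4 with h' | h'
      · rcases mul_eq_zero.mp h' with h'' | h''
        · exact h2 h''
        · exact hs h''
      · apply hd; rw [← he]
        have h3 : s = t := sub_eq_zero.mp h'
        rw [h3]; ring
    · intro h
      have h4 : (2*t)*(t - s) = 0 := by linear_combination h + he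
      rcases mul_eq_zero.mp h4 with h' | h'
      · rcases mul_eq_zero.mp h' with h'' | h''
        · exact h2 h''
        · exact ht h''
      · apply hd; rw [← he]
        have h3 : t = s := sub_eq_zero.mp h'
        rw [h3]; ring
  · intro v hv
    simp only [mem_filter, mem_univ, true_and, mem_coe] at hv ⊢
    obtain ⟨hv0, hvd, hvnd⟩ := hv
    refine ⟨?_, ?_, ?_⟩
    · intro h; apply hvd
      field_simp at h
      linear_combination -h
    · intro h; apply hvnd
      field_simp at h
      linear_combination h
    · field_simp
      ring
  · rintro ⟨s,t⟩ hst
    simp only [mem_filter, mem_univ, true_and, mem_coe] at hst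
    obtain ⟨hs, ht, he⟩ := hst
    have hv0 : t - s ≠ 0 := by
      intro h; apply hd; rw [← he]
      have h3 : t = s := by linear_combination h
      rw [h3]; ring
    have h1 : (d/(t-s) - (t-s))/2 = s := by
      field_simp
      linear_combination -he
    have h2' : (d/(t-s) + (t-s))/2 = t := by
      field_simp
      linear_combination -he
    simp [h1, h2']
  · intro v hv
    simp only [mem_filter, mem_univ, true_and, mem_coe] at hv
    field_simp [hv.1]
    ring

lemma cardS (h2 : (2:F) ≠ 0) (hns : ¬ IsSquare (-1 : F)) {a b : F} (hab : a ≠ b) :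
    4 * (univ.filter fun x : F => pedge a x ∧ pedge b x).card = Fintype.card F - 3 := by
  have hd : a - b ≠ 0 := sub_ne_zero.mpr hab
  rw [← cardP h2 hns hd]
  have hmaps : ∀ st ∈ (univ.filter fun st : F × F =>
      st.1 ≠ 0 ∧ st.2 ≠ 0 ∧ st.2^2 - st.1^2 = a - b),
      a + st.1^2 ∈ (univ.filter fun x : F => pedge a x ∧ pedge b x) := by
    rintro ⟨s, t⟩ hst
    simp only [mem_filter, mem_univ, true_and] at hst ⊢
    obtain ⟨hs, ht, he⟩ := hst
    exact ⟨⟨s, hs, by ring⟩, ⟨t, ht, by linear_combination -he⟩⟩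
  rw [Finset.card_eq_sum_card_fiberwise hmaps]
  have hfib : ∀ x ∈ (univ.filter fun x : F => pedge a x ∧ pedge b x),
      ((univ.filter fun st : F × F =>
        st.1 ≠ 0 ∧ st.2 ≠ 0 ∧ st.2^2 - st.1^2 = a - b).filter
        (fun st => a + st.1^2 = x)).card = 4 := by
    intro x hx
    simp only [mem_filter, mem_univ, true_and] at hx
    obtain ⟨⟨c, hc, hxa⟩, ⟨e, he, hxb⟩⟩ := hx
    have hset : ((univ.filter fun st : F × F =>
        st.1 ≠ 0 ∧ st.2 ≠ 0 ∧ st.2^2 - st.1^2 = a - b).filter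
        (fun st => a + st.1^2 = x)) = (({c, -c} : Finset F) ×ˢ ({e, -e} : Finset F)) := by
      ext ⟨s, t⟩
      simp only [mem_filter, mem_univ, true_and, mem_product, mem_insert, mem_singleton]
      constructor
      · rintro ⟨⟨hs, ht, hst⟩, hax⟩
        have hs2 : s^2 = c^2 := by linear_combination hax + hxa
        have ht2 : t^2 = e^2 := by linear_combination hst + hax + hxb
        exact ⟨sq_eq_sq_iff'.mp hs2, sq_eq_sq_iff'.mp ht2⟩
      · rintro ⟨hs, ht⟩
        have hs2 : s^2 = c^2 := by rcases hs with rfl|rfl <;> ring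
        have ht2 : t^2 = e^2 := by rcases ht with rfl|rfl <;> ring
        have hs0 : s ≠ 0 := by
          intro h0; apply hc
          rw [h0] at hs2
          have : c^2 = 0 := by linear_combination -hs2
          exact pow_eq_zero_iff (n := 2) (by norm_num) |>.mp this
        have ht0 : t ≠ 0 := by
          intro h0; apply he
          rw [h0] at ht2
          have : e^2 = 0 := by linear_combination -ht2
          exact pow_eq_zero_iff (n := 2) (by norm_num) |>.mp this
        refine ⟨⟨hs0, ht0, ?_⟩, ?_⟩
        · linear_combination ht2 - hs2 - hxb + hxa
        · linear_combination hs2 - hxa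
    rw [hset, card_product, card_pair (ne_neg_self h2 hc), card_pair (ne_neg_self h2 he)]
  rw [Finset.sum_congr rfl hfib, Finset.sum_const, smul_eq_mul, mul_comm]

lemma card_edge_pairs_aux (hns : ¬ IsSquare (-1 : F)) (S : Finset F) :
    2 * ((S ×ˢ S).filter fun r : F × F => pedge r.1 r.2).card + S.card = S.card * S.card := by
  classical
  have hsplit : ((S ×ˢ S).filter fun r : F × F => pedge r.1 r.2)
      ∪ ((S ×ˢ S).filter fun r : F × F => pedge r.2 r.1)
      = (S ×ˢ S).filter (fun r : F × F => ¬ r.1 = r.2) := by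
    rw [← filter_or]
    apply filter_congr
    rintro ⟨x, y⟩ _
    simp only [eq_iff_iff]
    constructor
    · rintro (h | h)
      · exact pedge_ne h
      · exact (pedge_ne h).symm
    · intro h; exact pedge_total hns h
  have hdisj : Disjoint ((S ×ˢ S).filter fun r : F × F => pedge r.1 r.2)
      ((S ×ˢ S).filter fun r : F × F => pedge r.2 r.1) := by
    rw [Finset.disjoint_left]
    rintro ⟨x, y⟩ h1 h2
    simp only [mem_filter] at h1 h2
    exact pedge_asymm hns h1.2 h2.2
  have hswap : ((S ×ˢ S).filter fun r : F × F => pedge r.1 r.2).card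
      = ((S ×ˢ S).filter fun r : F × F => pedge r.2 r.1).card := by
    apply Finset.card_nbij' Prod.swap Prod.swap <;>
      rintro ⟨x, y⟩ h <;>
      simp only [mem_filter, mem_product, Prod.swap_prod_mk, Prod.fst_swap, Prod.snd_swap, mem_coe] at * <;>
      tauto
  have hdiag : ((S ×ˢ S).filter fun r : F × F => r.1 = r.2).card = S.card := by
    apply Finset.card_nbij' Prod.fst (fun x => (x, x))
    · rintro ⟨x, y⟩ h
      simp only [mem_filter, mem_product, mem_coe] at h
      exact h.1.1
    · intro x hx; simp only [mem_filter, mem_product, mem_coe]; exact ⟨⟨hx, hx⟩, trivial⟩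
    · rintro ⟨x, y⟩ h
      simp only [mem_filter, mem_product, mem_coe] at h
      simp [h.2]
    · intro x hx; rfl
  have htot := Finset.card_filter_add_card_filter_not
    (s := S ×ˢ S) (p := fun r : F × F => r.1 = r.2)
  rw [hdiag, card_product] at htot
  have hu := Finset.card_union_of_disjoint hdisj
  rw [hsplit] at hu
  omega

lemma cardQ (hns : ¬ IsSquare (-1 : F)) :
    ((univ : Finset ((F × F) × (F × F))).filter fun z =>
      pedge z.1.1 z.1.2 ∧ pedge z.1.1 z.2.1 ∧ pedge z.1.1 z.2.2 ∧
      pedge z.1.2 z.2.1 ∧ pedge z.1.2 z.2.2 ∧ pedge z.2.1 z.2.2).card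
    = ∑ p ∈ (univ.filter fun p : F × F => pedge p.1 p.2),
        (((univ.filter fun x : F => pedge p.1 x ∧ pedge p.2 x)
          ×ˢ (univ.filter fun x : F => pedge p.1 x ∧ pedge p.2 x)).filter
          fun r : F × F => pedge r.1 r.2).card := by
  rw [Finset.card_eq_sum_card_fiberwise
    (f := fun z : (F × F) × (F × F) => z.1) (t := (univ : Finset (F × F)))
    (fun z _ => mem_univ _)]
  rw [Finset.sum_filter]
  apply Finset.sum_congr rfl
  intro p _
  by_cases hp : pedge p.1 p.2
  · rw [if_pos hp]
    refine Finset.card_bij' (fun z _ => z.2) (fun r _ => (p, r)) ?_ ?_ ?_ ?_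
    · rintro ⟨⟨a, b⟩, ⟨x, y⟩⟩ hz
      simp only [mem_filter, mem_univ, true_and, mem_product, Prod.mk.injEq] at hz ⊢
      obtain ⟨⟨e1, e2, e3, e4, e5, e6⟩, he⟩ := hz
      rw [Prod.ext_iff] at he
      obtain ⟨ha, hb⟩ := he
      simp only at ha hb
      subst ha; subst hb
      exact ⟨⟨⟨e2, e4⟩, ⟨e3, e5⟩⟩, e6⟩
    · rintro ⟨x, y⟩ hr
      simp only [mem_filter, mem_univ, true_and, mem_product] at hr
      obtain ⟨⟨⟨f1, f2⟩, ⟨f3, f4⟩⟩, f5⟩ := hr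
      refine mem_filter.mpr ⟨mem_filter.mpr ⟨mem_univ _, ?_⟩, rfl⟩
      exact ⟨hp, f1, f3, f2, f4, f5⟩
    · rintro ⟨⟨a, b⟩, ⟨x, y⟩⟩ hz
      simp only [mem_filter, mem_univ, true_and] at hz
      obtain ⟨-, he⟩ := hz
      rw [Prod.ext_iff] at he
      obtain ⟨ha, hb⟩ := he
      simp only at ha hb
      subst ha; subst hb
      rfl
    · rintro ⟨x, y⟩ _; rfl
  · rw [if_neg hp]
    rw [Finset.card_eq_zero]
    apply Finset.eq_empty_of_forall_notMem
    rintro ⟨⟨a, b⟩, ⟨x, y⟩⟩ hz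
    simp only [mem_filter, mem_univ, true_and] at hz
    obtain ⟨⟨e1, -⟩, he⟩ := hz
    rw [Prod.ext_iff] at he
    obtain ⟨ha, hb⟩ := he
    simp only at ha hb
    subst ha; subst hb
    exact hp e1

lemma chain_inj {f : Fin 4 → F} (hf : ∀ i j : Fin 4, i < j → pedge (f i) (f j)) :
    Function.Injective f := by
  intro i j h
  rcases lt_trichotomy i j with hij | hij | hij
  · exact absurd h (pedge_ne (hf i j hij))
  · exact hij
  · exact absurd h.symm (pedge_ne (hf j i hij))

lemma chain_unique (hns : ¬ IsSquare (-1 : F)) {f g : Fin 4 → F}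
    (hf : ∀ i j : Fin 4, i < j → pedge (f i) (f j))
    (hg : ∀ i j : Fin 4, i < j → pedge (g i) (g j))
    (h : Finset.image f univ = Finset.image g univ) : f = g := by
  have hm : ∀ i, ∃ j, g j = f i := by
    intro i
    have : f i ∈ Finset.image g univ := by
      rw [← h]; exact mem_image_of_mem f (mem_univ i)
    simpa [Finset.mem_image] using this
  choose e he using hm
  have hmono : StrictMono e := by
    intro i j hij
    have hne : e i ≠ e j := by
      intro hEq
      have hfij : f i = f j := by rw [← he i, ← he j, hEq]
      exact absurd hfij (pedge_ne (hf i j hij))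
    rcases lt_or_gt_of_ne hne with h' | h'
    · exact h'
    · exfalso
      have h1 : pedge (g (e j)) (g (e i)) := hg _ _ h'
      rw [he i, he j] at h1
      exact pedge_asymm hns (hf i j hij) h1
  have hsurj : Function.Surjective e :=
    Finite.surjective_of_injective hmono.injective
  have hid : e = id := by
    have := (StrictMono.range_inj hmono (strictMono_id (α := Fin 4))).mp
      (by rw [hsurj.range_eq]; simp)
    simpa using this
  funext i
  rw [← he i, hid]; rfl

lemma transK_eq (hns : ¬ IsSquare (-1 : F)) :
    transK (fun a b : F => ∃ c : F, c ≠ 0 ∧ b - a = c ^ 2) 4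
      = ((univ : Finset ((F × F) × (F × F))).filter fun z =>
      pedge z.1.1 z.1.2 ∧ pedge z.1.1 z.2.1 ∧ pedge z.1.1 z.2.2 ∧
      pedge z.1.2 z.2.1 ∧ pedge z.1.2 z.2.2 ∧ pedge z.2.1 z.2.2).card := by
  unfold transK
  have hset : {s : Finset F | ∃ f : Fin 4 → F, Function.Injective f ∧
      s = Finset.image f Finset.univ ∧
      ∀ i j : Fin 4, i < j → (fun a b : F => ∃ c : F, c ≠ 0 ∧ b - a = c ^ 2) (f i) (f j)}
      = (fun f : Fin 4 → F => Finset.image f Finset.univ) ''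
        {f : Fin 4 → F | ∀ i j : Fin 4, i < j → pedge (f i) (f j)} := by
    ext s
    simp only [Set.mem_setOf_eq, Set.mem_image]
    constructor
    · rintro ⟨f, hinj, rfl, hch⟩
      exact ⟨f, hch, rfl⟩
    · rintro ⟨f, hch, rfl⟩
      exact ⟨f, chain_inj hch, rfl, hch⟩
  have hbij : (univ.filter fun f : Fin 4 → F =>
      ∀ i j : Fin 4, i < j → pedge (f i) (f j)).card
      = ((univ : Finset ((F × F) × (F × F))).filter fun z =>
      pedge z.1.1 z.1.2 ∧ pedge z.1.1 z.2.1 ∧ pedge z.1.1 z.2.2 ∧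
      pedge z.1.2 z.2.1 ∧ pedge z.1.2 z.2.2 ∧ pedge z.2.1 z.2.2).card := by
    refine Finset.card_bij' (fun f _ => ((f 0, f 1), (f 2, f 3)))
      (fun z _ => fun i : Fin 4 =>
        if i = 0 then z.1.1 else if i = 1 then z.1.2 else if i = 2 then z.2.1 else z.2.2)
      ?_ ?_ ?_ ?_
    · intro f hf
      simp only [mem_filter, mem_univ, true_and] at hf ⊢
      exact ⟨hf 0 1 (by decide), hf 0 2 (by decide), hf 0 3 (by decide),
        hf 1 2 (by decide), hf 1 3 (by decide), hf 2 3 (by decide)⟩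
    · intro z hz
      simp only [mem_filter, mem_univ, true_and] at hz ⊢
      obtain ⟨e1, e2, e3, e4, e5, e6⟩ := hz
      intro i j hij
      fin_cases i <;> fin_cases j <;> simp_all
    · intro f hf
      funext i
      fin_cases i <;> simp
    · intro z hz
      simp
  have hinj : Set.InjOn (fun f : Fin 4 → F => Finset.image f Finset.univ)
      {f : Fin 4 → F | ∀ i j : Fin 4, i < j → pedge (f i) (f j)} :=
    fun f hf g hg h => chain_unique hns hf hg h
  rw [hset, Set.ncard_image_of_injOn hinj, ← hbij, ← Set.ncard_coe_finset]
  congr 1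
  ext f
  simp

end Aux

theorem stmt_3 {F : Type} [Field F] [Fintype F] [DecidableEq F] (q : ℕ)
    (hq : Fintype.card F = q) (hmod : q % 4 = 3) :
    (2 ^ 6 * (transK (fun a b : F => ∃ c : F, c ≠ 0 ∧ b - a = c ^ 2) 4) : ℤ) =
      (q : ℤ) * ((q : ℤ) - 1) * ((q : ℤ) - 3) * ((q : ℤ) - 7) := by
  classical
  have hq3 : 3 ≤ q := by omega
  have hns : ¬ IsSquare (-1 : F) := by
    rw [FiniteField.isSquare_neg_one_iff, hq]
    omega
  have hchar : ringChar F ≠ 2 := by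
    intro h
    have := FiniteField.even_card_of_char_two h
    rw [hq] at this
    omega
  have h2 : (2 : F) ≠ 0 := Ring.two_ne_zero hchar
  rw [transK_eq hns]
  have hQ := cardQ (F := F) hns
  have hE := card_edge_pairs_aux hns (univ : Finset F)
  rw [Finset.univ_product_univ, card_univ, hq] at hE
  have hE' : 2 * (((univ : Finset (F × F)).filter fun p : F × F => pedge p.1 p.2).card : ℤ)
      + (q : ℤ) = (q : ℤ) * q := by exact_mod_cast hE
  have hterm : ∀ p ∈ ((univ : Finset (F × F)).filter fun p : F × F => pedge p.1 p.2),
      (32 : ℤ) * ((((univ.filter fun x : F => pedge p.1 x ∧ pedge p.2 x)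
          ×ˢ (univ.filter fun x : F => pedge p.1 x ∧ pedge p.2 x)).filter
          fun r : F × F => pedge r.1 r.2).card : ℤ)
        = ((q : ℤ) - 3) * ((q : ℤ) - 7) := by
    intro p hp
    simp only [mem_filter, mem_univ, true_and] at hp
    have hab : p.1 ≠ p.2 := pedge_ne hp
    have h1 := card_edge_pairs_aux hns (univ.filter fun x : F => pedge p.1 x ∧ pedge p.2 x)
    have h4 := cardS h2 hns hab
    rw [hq] at h4
    have h4' : (4 : ℤ) * ((univ.filter fun x : F => pedge p.1 x ∧ pedge p.2 x).card : ℤ)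
        = (q : ℤ) - 3 := by omega
    have h1' : (2 : ℤ) * ((((univ.filter fun x : F => pedge p.1 x ∧ pedge p.2 x)
          ×ˢ (univ.filter fun x : F => pedge p.1 x ∧ pedge p.2 x)).filter
          fun r : F × F => pedge r.1 r.2).card : ℤ)
        + ((univ.filter fun x : F => pedge p.1 x ∧ pedge p.2 x).card : ℤ)
        = ((univ.filter fun x : F => pedge p.1 x ∧ pedge p.2 x).card : ℤ)
          * ((univ.filter fun x : F => pedge p.1 x ∧ pedge p.2 x).card : ℤ) := by
      exact_mod_cast h1
    linear_combination ((q : ℤ) - 7 + 4 * ((univ.filter fun x : F =>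
      pedge p.1 x ∧ pedge p.2 x).card : ℤ)) * h4' + 16 * h1'
  have hQZ : (((univ : Finset ((F × F) × (F × F))).filter fun z =>
      pedge z.1.1 z.1.2 ∧ pedge z.1.1 z.2.1 ∧ pedge z.1.1 z.2.2 ∧
      pedge z.1.2 z.2.1 ∧ pedge z.1.2 z.2.2 ∧ pedge z.2.1 z.2.2).card : ℤ)
      = ∑ p ∈ ((univ : Finset (F × F)).filter fun p : F × F => pedge p.1 p.2),
        (((((univ.filter fun x : F => pedge p.1 x ∧ pedge p.2 x)
          ×ˢ (univ.filter fun x : F => pedge p.1 x ∧ pedge p.2 x)).filter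
          fun r : F × F => pedge r.1 r.2).card : ℤ)) := by
    exact_mod_cast hQ
  have hQ' : (32 : ℤ) * (((univ : Finset ((F × F) × (F × F))).filter fun z =>
      pedge z.1.1 z.1.2 ∧ pedge z.1.1 z.2.1 ∧ pedge z.1.1 z.2.2 ∧
      pedge z.1.2 z.2.1 ∧ pedge z.1.2 z.2.2 ∧ pedge z.2.1 z.2.2).card : ℤ)
      = (((univ : Finset (F × F)).filter fun p : F × F => pedge p.1 p.2).card : ℤ)
        * (((q : ℤ) - 3) * ((q : ℤ) - 7)) := by
    rw [hQZ, Finset.mul_sum, Finset.sum_congr rfl hterm, Finset.sum_const,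
      nsmul_eq_mul]
  linear_combination 2 * hQ' + (((q : ℤ) - 3) * ((q : ℤ) - 7)) * hE'
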